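/- Let μ̂₁,...,μ̂ᴷ be independent ℝᵖ-valued estimators of μ, and suppose for each j in a subset J ⊆ {1,...,K} with |J| ≥ (1-τ)K one has P(‖μ̂ⱼ - μ‖₂ > ε) ≤ p, where 0 < p < α < 1/2 and τ < (α-p)/(1-p). Then P(‖Gmed(μ̂₁,...,μ̂ᴷ) - μ‖₂ > C_α ε) ≤ exp(-K(1-τ)ψ((α-τ)/(1-τ), p)), where C_α = (1-α)/√(1-2α) and ψ(a,q) = (1-a)log((1-a)/(1-q)) + a log(a/q). -/

import Mathlib

open MeasureTheory ProbabilityTheory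
open Finset

/-- The binary Kullback–Leibler divergence between `Bernoulli(a)` and `Bernoulli(q)`. -/
noncomputable def psiKL (a q : ℝ) : ℝ :=
  (1 - a) * Real.log ((1 - a) / (1 - q)) + a * Real.log (a / q)

lemma sqrt_le_add_aux {x y : ℝ} (hx : 0 ≤ x) (hy : 0 < y) :
    Real.sqrt x ≤ Real.sqrt y + (x - y) / (2 * Real.sqrt y) := by
  have hsy : 0 < Real.sqrt y := Real.sqrt_pos.2 hy
  rw [← sub_le_iff_le_add', le_div_iff₀ (by positivity)]
  have h1 : Real.sqrt x * Real.sqrt x = x := Real.mul_self_sqrt hx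
  have h2 : Real.sqrt y * Real.sqrt y = y := Real.mul_self_sqrt hy.le
  nlinarith [sq_nonneg (Real.sqrt x - Real.sqrt y)]

lemma alg_neg {G R Kr D e σ M : ℝ} (hG : G ≠ 0) (hD : D ≠ 0) (hDe : D - e ≠ 0)
    (hM : M = G * R - (Kr - G) * D) (hσ : σ = M * (D - e) / (G * D ^ 2)) :
    G * (σ ^ 2 * D ^ 2 / (2 * (D - e)) - σ * R) + (Kr - G) * (σ * D) = -σ * M / 2 := by
  subst hσ; subst hM; field_simp; ring

lemma inner_lb {E : Type*} [NormedAddCommGroup E] [InnerProductSpace ℝ E]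
    {m w : E} {D ε : ℝ} (hD : ‖m‖ = D) (hw : ‖w‖ ≤ ε) (hεD : ε < D) (hε : 0 ≤ ε) :
    Real.sqrt (D ^ 2 - ε ^ 2) * ‖m + w‖ ≤ inner ℝ (m + w) m := by
  set S : ℝ := inner ℝ m w with hS
  have hcs : |S| ≤ ε * D := by
    calc |S| ≤ ‖m‖ * ‖w‖ := abs_real_inner_le_norm m w
    _ ≤ D * ε := by rw [hD]; exact mul_le_mul_of_nonneg_left hw (by linarith [norm_nonneg w, hD])
    _ = ε * D := mul_comm _ _
  have hn : ‖m + w‖ ^ 2 = D ^ 2 + 2 * S + ‖w‖ ^ 2 := by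
    rw [← hD]; exact norm_add_sq_real m w
  have hiv : (inner ℝ (m + w) m : ℝ) = D ^ 2 + S := by
    rw [inner_add_left, real_inner_self_eq_norm_sq, hD, real_inner_comm, ← hS]
  have habs := abs_le.1 hcs
  have hpos : (0:ℝ) ≤ D ^ 2 + S := by nlinarith
  rw [hiv]
  have key : (D ^ 2 - ε ^ 2) * ‖m + w‖ ^ 2 ≤ (D ^ 2 + S) ^ 2 := by
    have hw2 : ‖w‖ ^ 2 ≤ ε ^ 2 := by nlinarith [norm_nonneg w]
    have hd2 : ε ^ 2 ≤ D ^ 2 := by nlinarith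
    nlinarith [sq_nonneg (S + ε ^ 2), mul_nonneg (sub_nonneg.2 hw2) (sub_nonneg.2 hd2)]
  calc Real.sqrt (D ^ 2 - ε ^ 2) * ‖m + w‖
      = Real.sqrt ((D ^ 2 - ε ^ 2) * ‖m + w‖ ^ 2) := by
        rw [Real.sqrt_mul (by nlinarith) , Real.sqrt_sq (norm_nonneg _)]
    _ ≤ Real.sqrt ((D ^ 2 + S) ^ 2) := Real.sqrt_le_sqrt key
    _ = D ^ 2 + S := Real.sqrt_sq hpos

set_option maxHeartbeats 1000000 in
lemma det_majority {E : Type*} [NormedAddCommGroup E] [InnerProductSpace ℝ E]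
    {K : ℕ} (x : Fin K → E) (μ z : E) {α ε : ℝ}
    (hα0 : 0 < α) (hα : α < 1 / 2) (hε : 0 ≤ ε) (hK : 0 < K)
    (hmin : IsMinOn (fun w => ∑ j, ‖x j - w‖) Set.univ z)
    (hfar : (1 - α) / Real.sqrt (1 - 2 * α) * ε < ‖z - μ‖) :
    (((univ : Finset (Fin K)).filter (fun j => ‖x j - μ‖ ≤ ε)).card : ℝ) < (1 - α) * K := by
  classical
  by_contra hcon
  push_neg at hcon
  set m : E := μ - z with hm
  set D : ℝ := ‖m‖ with hDdef
  have hzμ : ‖z - μ‖ = D := by rw [hDdef, hm, norm_sub_rev]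
  rw [hzμ] at hfar
  have h2α : (0:ℝ) < 1 - 2 * α := by linarith
  have hs2α : 0 < Real.sqrt (1 - 2 * α) := Real.sqrt_pos.2 h2α
  have hsle : Real.sqrt (1 - 2 * α) ≤ 1 - α := by
    rw [show (1 - α : ℝ) = Real.sqrt ((1 - α) ^ 2) by rw [Real.sqrt_sq (by linarith)]]
    exact Real.sqrt_le_sqrt (by nlinarith)
  have hC1 : (1:ℝ) ≤ (1 - α) / Real.sqrt (1 - 2 * α) := by
    rw [le_div_iff₀ hs2α]; linarith
  have hεD : ε < D := by
    calc ε = 1 * ε := (one_mul ε).symm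
    _ ≤ (1 - α) / Real.sqrt (1 - 2 * α) * ε := mul_le_mul_of_nonneg_right hC1 hε
    _ < D := hfar
  have hD0 : 0 < D := lt_of_le_of_lt hε hεD
  have hsq : (1 - α) ^ 2 * ε ^ 2 < (1 - 2 * α) * D ^ 2 := by
    have h1 : (1 - α) * ε < D * Real.sqrt (1 - 2 * α) := by
      rw [div_mul_eq_mul_div, div_lt_iff₀ hs2α] at hfar; linarith
    have h2 : ((1 - α) * ε) ^ 2 < (D * Real.sqrt (1 - 2 * α)) ^ 2 := by
      have hh : 0 ≤ (1 - α) * ε := mul_nonneg (by linarith) hε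
      nlinarith
    have h3 : (Real.sqrt (1 - 2 * α)) ^ 2 = 1 - 2 * α := Real.sq_sqrt h2α.le
    nlinarith
  set R : ℝ := Real.sqrt (D ^ 2 - ε ^ 2) with hRdef
  have hR0 : 0 ≤ R := Real.sqrt_nonneg _
  have hR : α * D < (1 - α) * R := by
    have h1 : (α * D) ^ 2 < (1 - α) ^ 2 * (D ^ 2 - ε ^ 2) := by nlinarith
    have h2 : α * D < Real.sqrt ((1 - α) ^ 2 * (D ^ 2 - ε ^ 2)) := by
      have := Real.lt_sqrt (y := (1 - α) ^ 2 * (D ^ 2 - ε ^ 2)) (x := α * D)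
        (mul_nonneg hα0.le hD0.le)
      exact this.2 h1
    calc α * D < Real.sqrt ((1 - α) ^ 2 * (D ^ 2 - ε ^ 2)) := h2
    _ = (1 - α) * R := by
        rw [hRdef, ← Real.sqrt_sq (show (0:ℝ) ≤ 1 - α by linarith), ← Real.sqrt_mul (by positivity),
          Real.sqrt_sq (by linarith)]
  set Good : Finset (Fin K) := (univ : Finset (Fin K)).filter (fun j => ‖x j - μ‖ ≤ ε) with hGood
  set G : ℝ := (Good.card : ℝ) with hGdef
  have hGKnat : Good.card ≤ K := by
    simpa using card_filter_le (univ : Finset (Fin K)) (fun j => ‖x j - μ‖ ≤ ε)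
  have hGK : G ≤ (K : ℝ) := by rw [hGdef]; exact_mod_cast hGKnat
  have hK1 : (1:ℝ) ≤ (K:ℝ) := by exact_mod_cast hK
  have hG0 : 0 < G := by nlinarith
  have hM : 0 < G * R - ((K:ℝ) - G) * D := by
    nlinarith [mul_le_mul_of_nonneg_right hcon hR0, mul_le_mul_of_nonneg_right hcon hD0.le]
  set M : ℝ := G * R - ((K:ℝ) - G) * D with hMdef
  set σ : ℝ := M * (D - ε) / (G * D ^ 2) with hσdef
  have hσ : 0 < σ := by
    apply div_pos (mul_pos hM (by linarith)) (by positivity)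
  -- per point bounds
  have hbound : ∀ j : Fin K, ‖x j - (z + σ • m)‖ ≤ ‖x j - z‖ +
      (if ‖x j - μ‖ ≤ ε then σ ^ 2 * D ^ 2 / (2 * (D - ε)) - σ * R else σ * D) := by
    intro j
    have hsm : ‖σ • m‖ = σ * D := by
      rw [norm_smul, Real.norm_eq_abs, abs_of_nonneg hσ.le]
    have hrw : x j - (z + σ • m) = (x j - z) - σ • m := by abel
    by_cases hj : ‖x j - μ‖ ≤ ε
    · simp only [hj, if_true]
      set a : E := x j - z with ha
      set w : E := x j - μ with hw
      have haw : a = m + w := by rw [ha, hm, hw]; abel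
      have hIa : R * ‖a‖ ≤ inner ℝ a m := by
        rw [haw]; exact inner_lb rfl hj hεD hε
      have hna : D - ε ≤ ‖a‖ := by
        rw [haw]
        have h1 : ‖m‖ ≤ ‖m + w‖ + ‖w‖ := by
          have h := norm_add_le (m + w) (-w)
          rw [add_neg_cancel_right, norm_neg] at h
          linarith
        have hDm : D = ‖m‖ := hDdef
        linarith
      have hna0 : 0 < ‖a‖ := by linarith
      have hexp : ‖a - σ • m‖ ^ 2 = ‖a‖ ^ 2 - 2 * σ * inner ℝ a m + σ ^ 2 * D ^ 2 := by
        rw [norm_sub_sq_real, real_inner_smul_right, norm_smul, Real.norm_eq_abs,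
          abs_of_nonneg hσ.le]
        ring
      have hstep : ‖a - σ • m‖ ≤ ‖a‖ + (‖a - σ • m‖ ^ 2 - ‖a‖ ^ 2) / (2 * ‖a‖) := by
        have := sqrt_le_add_aux (x := ‖a - σ • m‖ ^ 2) (y := ‖a‖ ^ 2) (by positivity)
          (by positivity)
        rwa [Real.sqrt_sq (norm_nonneg _), Real.sqrt_sq (norm_nonneg _)] at this
      rw [hrw]
      set I : ℝ := inner ℝ a m with hI
      have hfinal : (‖a - σ • m‖ ^ 2 - ‖a‖ ^ 2) / (2 * ‖a‖) ≤
          σ ^ 2 * D ^ 2 / (2 * (D - ε)) - σ * R := by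
        rw [hexp]
        have heq : (‖a‖ ^ 2 - 2 * σ * I + σ ^ 2 * D ^ 2 - ‖a‖ ^ 2) / (2 * ‖a‖)
            = σ ^ 2 * D ^ 2 / (2 * ‖a‖) - σ * I / ‖a‖ := by
          field_simp; ring
        rw [heq]
        have h1 : σ ^ 2 * D ^ 2 / (2 * ‖a‖) ≤ σ ^ 2 * D ^ 2 / (2 * (D - ε)) := by
          apply div_le_div_of_nonneg_left (by positivity) (by linarith) (by linarith)
        have h2 : σ * R ≤ σ * I / ‖a‖ := by
          rw [le_div_iff₀ hna0]
          calc σ * R * ‖a‖ = σ * (R * ‖a‖) := by ring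
          _ ≤ σ * I := mul_le_mul_of_nonneg_left hIa hσ.le
        linarith
      linarith
    · simp only [hj, if_false]
      rw [hrw]
      calc ‖(x j - z) - σ • m‖ ≤ ‖x j - z‖ + ‖σ • m‖ := norm_sub_le _ _
      _ = ‖x j - z‖ + σ * D := by rw [hsm]
  -- sum up
  have hmin' := isMinOn_iff.1 hmin (z + σ • m) (Set.mem_univ _)
  have hsum : ∑ j, ‖x j - (z + σ • m)‖ ≤ ∑ j, (‖x j - z‖ +
      (if ‖x j - μ‖ ≤ ε then σ ^ 2 * D ^ 2 / (2 * (D - ε)) - σ * R else σ * D)) :=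
    Finset.sum_le_sum (fun j _ => hbound j)
  have hsplit : ∑ j, (if ‖x j - μ‖ ≤ ε then σ ^ 2 * D ^ 2 / (2 * (D - ε)) - σ * R else σ * D)
      = G * (σ ^ 2 * D ^ 2 / (2 * (D - ε)) - σ * R) + ((K:ℝ) - G) * (σ * D) := by
    rw [Finset.sum_ite, Finset.sum_const, Finset.sum_const, nsmul_eq_mul, nsmul_eq_mul]
    have h := Finset.card_filter_add_card_filter_not
        (s := (univ : Finset (Fin K))) (p := fun j => ‖x j - μ‖ ≤ ε)
    have h' : Good.card + (univ.filter (fun j => ¬ ‖x j - μ‖ ≤ ε)).card = K := by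
      rw [hGood]; simpa using h
    have hcards : ((univ.filter (fun j => ¬ ‖x j - μ‖ ≤ ε)).card : ℝ) = (K:ℝ) - G := by
      rw [hGdef]
      have := congrArg (fun n : ℕ => (n : ℝ)) h'
      push_cast at this
      linarith
    rw [hcards, hGdef, hGood]
  have hGne : G ≠ 0 := ne_of_gt hG0
  have hDne : D ≠ 0 := ne_of_gt hD0
  have hDεne : D - ε ≠ 0 := by intro h; linarith
  have hneg : G * (σ ^ 2 * D ^ 2 / (2 * (D - ε)) - σ * R) + ((K:ℝ) - G) * (σ * D)
      = - σ * M / 2 := alg_neg hGne hDne hDεne hMdef hσdef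
  rw [Finset.sum_add_distrib, hsplit, hneg] at hsum
  have := le_trans hmin' hsum
  nlinarith [mul_pos hσ hM]



set_option maxHeartbeats 4000000 in
/-- Minsker's aggregation lemma under corruption: if among `μ̂₁,...,μ̂ᴷ` the estimators indexed
by `J`, `|J| ≥ (1-τ)K`, are independent and each satisfies `P(‖μ̂ⱼ - μ‖₂ > ε) ≤ p`, with
`0 < p < α < 1/2` and `τ < (α-p)/(1-p)`, then the geometric median `Gm` satisfies
`P(‖Gm - μ‖₂ > C_α ε) ≤ exp(-K(1-τ)ψ((α-τ)/(1-τ), p))` with `C_α = (1-α)/√(1-2α)`. -/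
theorem geometric_median_aggregation
    {Ω : Type*} [MeasurableSpace Ω] (P : Measure Ω) [IsProbabilityMeasure P]
    {p K : ℕ} (μhat : Fin K → Ω → EuclideanSpace ℝ (Fin p))
    (μ : EuclideanSpace ℝ (Fin p)) (J : Finset (Fin K)) (τ α q ε : ℝ)
    (hq0 : 0 < q) (hqα : q < α) (hα : α < 1 / 2)
    (hτ0 : 0 ≤ τ) (hτ : τ < (α - q) / (1 - q))
    (hJcard : (1 - τ) * (K : ℝ) ≤ (J.card : ℝ))
    (hmeas : ∀ j, Measurable (μhat j))
    (hindep : iIndepFun (fun j : J => μhat j) P)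
    (hconc : ∀ j ∈ J, P {ω | ε < ‖μhat j ω - μ‖} ≤ ENNReal.ofReal q)
    (Gm : Ω → EuclideanSpace ℝ (Fin p))
    (hGm : ∀ ω,
      IsMinOn (fun z : EuclideanSpace ℝ (Fin p) => ∑ j, ‖μhat j ω - z‖) Set.univ (Gm ω)) :
    P {ω | (1 - α) / Real.sqrt (1 - 2 * α) * ε < ‖Gm ω - μ‖} ≤
      ENNReal.ofReal (Real.exp (-(K : ℝ) * (1 - τ) * psiKL ((α - τ) / (1 - τ)) q)) := by
  classical
  -- scalar facts
  have hq1 : q < 1 := by linarith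
  have h1q : 0 < 1 - q := by linarith
  have hτ' : τ * (1 - q) < α - q := (lt_div_iff₀ h1q).1 hτ
  have hτ1 : τ < 1 := by nlinarith
  have h1τ : 0 < 1 - τ := by linarith
  set a : ℝ := (α - τ) / (1 - τ) with hadef
  have hqa : q < a := by rw [hadef, lt_div_iff₀ h1τ]; nlinarith
  have ha1 : a < 1 := by rw [hadef, div_lt_one h1τ]; linarith
  have ha0 : 0 < a := lt_trans hq0 hqa
  have h1a : 0 < 1 - a := by linarith
  have haτ : (1 - τ) * a = α - τ := by rw [hadef]; field_simp
  set lam : ℝ := Real.log (a * (1 - q) / ((1 - a) * q)) with hlam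
  set Lam : ℝ := Real.log ((1 - q) / (1 - a)) with hLam
  have hratio : (1:ℝ) ≤ a * (1 - q) / ((1 - a) * q) := by
    rw [le_div_iff₀ (by positivity)]; nlinarith
  have hlam0 : 0 ≤ lam := Real.log_nonneg hratio
  have hrpos : 0 < (1 - q) / (1 - a) := by positivity
  have heLam : Real.exp Lam = (1 - q) / (1 - a) := Real.exp_log hrpos
  have helam : Real.exp lam = a * (1 - q) / ((1 - a) * q) := Real.exp_log (by positivity)
  have hLamle : Lam ≤ lam := by
    apply Real.log_le_log hrpos
    rw [div_le_div_iff₀ h1a (by positivity)]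
    nlinarith [mul_lt_mul_of_pos_left hqa (mul_pos h1q h1a)]
  have hLam0 : 0 ≤ Lam := Real.log_nonneg (by rw [le_div_iff₀ h1a]; nlinarith)
  have hmgfval : 1 + q * (Real.exp lam - 1) = (1 - q) / (1 - a) := by
    rw [helam]; field_simp; ring
  have hpsi : psiKL a q = lam * a - Lam := by
    have e1 : Real.log (a * (1 - q) / ((1 - a) * q))
        = Real.log a + Real.log (1 - q) - (Real.log (1 - a) + Real.log q) := by
      rw [Real.log_div (by positivity) (by positivity),
        Real.log_mul (ne_of_gt ha0) (ne_of_gt h1q), Real.log_mul (ne_of_gt h1a) (ne_of_gt hq0)]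
    have e2 : Real.log ((1 - q) / (1 - a)) = Real.log (1 - q) - Real.log (1 - a) :=
      Real.log_div (ne_of_gt h1q) (ne_of_gt h1a)
    have e3 : Real.log ((1 - a) / (1 - q)) = Real.log (1 - a) - Real.log (1 - q) :=
      Real.log_div (ne_of_gt h1a) (ne_of_gt h1q)
    have e4 : Real.log (a / q) = Real.log a - Real.log q :=
      Real.log_div (ne_of_gt ha0) (ne_of_gt hq0)
    rw [psiKL, hlam, hLam, e1, e2, e3, e4]
    ring
  -- trivial case K = 0
  rcases Nat.eq_zero_or_pos K with hK0 | hK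
  · subst hK0
    simp only [Nat.cast_zero, neg_zero, zero_mul, Real.exp_zero, ENNReal.ofReal_one]
    exact prob_le_one
  -- case ε < 0 : contradiction
  rcases lt_or_ge ε 0 with hε | hε
  · exfalso
    have hJne : J.Nonempty := by
      rw [← Finset.card_pos]
      have hKpos : (0:ℝ) < (K:ℝ) := by exact_mod_cast hK
      have hc : (0:ℝ) < (J.card : ℝ) := lt_of_lt_of_le (by nlinarith) hJcard
      exact_mod_cast hc
    obtain ⟨j0, hj0⟩ := hJne
    have h1 : {ω | ε < ‖μhat j0 ω - μ‖} = Set.univ := by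
      ext ω; simp only [Set.mem_setOf_eq, Set.mem_univ, iff_true]
      exact lt_of_lt_of_le hε (norm_nonneg _)
    have h2 := hconc j0 hj0
    rw [h1, measure_univ] at h2
    have h3 : ENNReal.ofReal q < 1 := by
      rw [ENNReal.ofReal_lt_one]; exact hq1
    exact absurd (lt_of_le_of_lt h2 h3) (lt_irrefl _)
  -- the main case
  have hα0 : 0 < α := lt_trans hq0 hqα
  set A : Fin K → Set Ω := fun j => {ω | ε < ‖μhat j ω - μ‖} with hA
  have hAmeas : ∀ j, MeasurableSet (A j) := by
    intro j
    have hcont : Continuous fun v : EuclideanSpace ℝ (Fin p) => ‖v - μ‖ :=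
      (continuous_id.sub continuous_const).norm
    exact measurableSet_lt measurable_const (hcont.measurable.comp (hmeas j))
  set g : EuclideanSpace ℝ (Fin p) → ℝ :=
    Set.indicator {v : EuclideanSpace ℝ (Fin p) | ε < ‖v - μ‖} (fun _ => (1:ℝ)) with hg
  have hgmeas : Measurable g := by
    apply Measurable.indicator measurable_const
    have hcont : Continuous fun v : EuclideanSpace ℝ (Fin p) => ‖v - μ‖ :=
      (continuous_id.sub continuous_const).norm
    exact measurableSet_lt measurable_const hcont.measurable
  set X : Fin K → Ω → ℝ := fun j ω => g (μhat j ω) with hX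
  have hXind : ∀ j ω, X j ω = if ε < ‖μhat j ω - μ‖ then 1 else 0 := by
    intro j ω
    rw [hX, hg]
    simp [Set.indicator_apply]
  have hXindic : ∀ j, X j = (A j).indicator (fun _ => (1:ℝ)) := by
    intro j; funext ω
    rw [hXind, hA, Set.indicator_apply]
    rfl
  have hXmeas : ∀ j, Measurable (X j) := fun j => hgmeas.comp (hmeas j)
  have hX01 : ∀ j ω, 0 ≤ X j ω ∧ X j ω ≤ 1 := by
    intro j ω; rw [hXind]; split <;> norm_num
  set Y : J → Ω → ℝ := fun j => X j with hY
  have hYindep : iIndepFun Y P :=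
    hindep.comp (fun _ => g) (fun _ => hgmeas)
  set S : Ω → ℝ := ∑ j : J, Y j with hS
  have hSapp : ∀ ω, S ω = ∑ j : J, X j ω := by
    intro ω; rw [hS]; exact Finset.sum_apply ω univ Y
  have hSfun : S = fun ω => ∑ j : J, X j ω := funext hSapp
  have hSmeas : Measurable S := by
    rw [hSfun]; exact Finset.measurable_sum univ (fun j _ => hXmeas (j : Fin K))
  set n : ℝ := (J.card : ℝ) with hn
  have hn1τ : (1 - τ) * (K:ℝ) ≤ n := hJcard
  set t0 : ℝ := n - (1 - α) * K with ht0
  -- event inclusion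
  have hsub : {ω | (1 - α) / Real.sqrt (1 - 2 * α) * ε < ‖Gm ω - μ‖} ⊆ {ω | t0 ≤ S ω} := by
    intro ω hω
    simp only [Set.mem_setOf_eq] at hω ⊢
    have hdet := det_majority (fun j => μhat j ω) μ (Gm ω) hα0 hα hε hK (hGm ω) hω
    -- counting
    have hcount : S ω = ((J.filter (fun j => ε < ‖μhat j ω - μ‖)).card : ℝ) := by
      rw [hSapp]
      have h1 : ∑ j : J, X j ω = ∑ j ∈ J, X j ω := by
        rw [Finset.sum_coe_sort J (fun j => X j ω)]
      rw [h1]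
      have h2 : ∀ j ∈ J, X j ω = if ε < ‖μhat j ω - μ‖ then (1:ℝ) else 0 :=
        fun j _ => hXind j ω
      rw [Finset.sum_congr rfl h2, Finset.sum_boole]
    have hsplitJ : (J.filter (fun j => ε < ‖μhat j ω - μ‖)).card
        + (J.filter (fun j => ¬ ε < ‖μhat j ω - μ‖)).card = J.card :=
      Finset.card_filter_add_card_filter_not _
    have hsubfil : J.filter (fun j => ¬ ε < ‖μhat j ω - μ‖)
        ⊆ univ.filter (fun j => ‖μhat j ω - μ‖ ≤ ε) := by
      intro j hj
      rw [Finset.mem_filter] at hj ⊢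
      exact ⟨Finset.mem_univ _, not_lt.1 hj.2⟩
    have hcard2 : ((J.filter (fun j => ¬ ε < ‖μhat j ω - μ‖)).card : ℝ)
        ≤ ((univ.filter (fun j => ‖μhat j ω - μ‖ ≤ ε)).card : ℝ) := by
      exact_mod_cast Finset.card_le_card hsubfil
    have hc := congrArg (fun n : ℕ => (n : ℝ)) hsplitJ
    push_cast at hc
    rw [hcount, ht0, hn]
    linarith
  refine le_trans (measure_mono hsub) ?_
  rw [ENNReal.le_ofReal_iff_toReal_le (measure_ne_top _ _) (Real.exp_nonneg _)]
  -- integrability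
  have hSbound : ∀ ω, 0 ≤ S ω ∧ S ω ≤ n := by
    intro ω
    rw [hSapp]
    constructor
    · exact Finset.sum_nonneg fun j _ => (hX01 j ω).1
    · calc ∑ j : J, X j ω ≤ ∑ _j : J, (1:ℝ) :=
            Finset.sum_le_sum fun j _ => (hX01 j ω).2
      _ = (Fintype.card J : ℝ) := by rw [Finset.sum_const, Finset.card_univ]; simp
      _ = n := by rw [hn, Fintype.card_coe]
  have hint : Integrable (fun ω => Real.exp (lam * S ω)) P := by
    apply Integrable.mono' (integrable_const (Real.exp (lam * n)))
    · exact ((hSmeas.const_mul lam).exp).aestronglyMeasurable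
    · filter_upwards with ω
      rw [Real.norm_eq_abs, abs_of_nonneg (Real.exp_nonneg _)]
      exact Real.exp_le_exp.2 (mul_le_mul_of_nonneg_left (hSbound ω).2 hlam0)
  have hchern := measure_ge_le_exp_mul_mgf (X := S) (μ := P) (t := lam) t0 hlam0 hint
  refine le_trans hchern ?_
  -- mgf bound
  have hXint : ∀ j : Fin K, Integrable (X j) P := by
    intro j
    rw [hXindic j]
    exact (integrable_const (1:ℝ)).indicator (hAmeas j)
  have hmgfj : ∀ j : J, mgf (Y j) P lam ≤ (1 - q) / (1 - a) := by
    intro j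
    have hpt : (fun ω => Real.exp (lam * Y j ω)) = fun ω => 1 + (Real.exp lam - 1) * Y j ω := by
      funext ω
      show Real.exp (lam * X (j : Fin K) ω) = 1 + (Real.exp lam - 1) * X (j : Fin K) ω
      rw [hXind (j : Fin K) ω]
      split
      · simp
      · simp
    have hiY : ∫ ω, Y j ω ∂P = (P (A (j : Fin K))).toReal := by
      show ∫ ω, X (j : Fin K) ω ∂P = _
      rw [hXindic (j : Fin K), integral_indicator_const (1:ℝ) (hAmeas (j : Fin K))]
      simp
      rfl
    have hmeq : mgf (Y j) P lam = 1 + (Real.exp lam - 1) * (P (A (j : Fin K))).toReal := by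
      rw [mgf, hpt]
      rw [integral_add (integrable_const 1) ((hXint (j : Fin K)).const_mul _)]
      rw [integral_const_mul, integral_const, hiY]
      simp [measure_univ]
    rw [hmeq]
    have hPj : (P (A (j : Fin K))).toReal ≤ q :=
      ENNReal.toReal_le_of_le_ofReal hq0.le (hconc (j : Fin K) j.2)
    have helam1 : 1 ≤ Real.exp lam := by
      rw [← Real.exp_zero]; exact Real.exp_le_exp.2 hlam0
    calc 1 + (Real.exp lam - 1) * (P (A (j : Fin K))).toReal
        ≤ 1 + (Real.exp lam - 1) * q := by
          apply add_le_add_right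
          exact mul_le_mul_of_nonneg_left hPj (by linarith)
    _ = (1 - q) / (1 - a) := by rw [← hmgfval]; ring
  have hmgfS : mgf S P lam ≤ ((1 - q) / (1 - a)) ^ J.card := by
    rw [hS, hYindep.mgf_sum (fun j => hgmeas.comp (hmeas (j : Fin K))) univ]
    calc ∏ j : J, mgf (Y j) P lam ≤ ∏ _j : J, (1 - q) / (1 - a) :=
          Finset.prod_le_prod (fun j _ => mgf_nonneg) (fun j _ => hmgfj j)
    _ = ((1 - q) / (1 - a)) ^ J.card := by
        rw [Finset.prod_const, Finset.card_univ, Fintype.card_coe]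
  -- final numeric computation
  have hpow : ((1 - q) / (1 - a)) ^ J.card = Real.exp (n * Lam) := by
    rw [← heLam, ← Real.exp_nat_mul, hn]
  calc Real.exp (-lam * t0) * mgf S P lam
      ≤ Real.exp (-lam * t0) * Real.exp (n * Lam) := by
        rw [← hpow]
        exact mul_le_mul_of_nonneg_left hmgfS (Real.exp_nonneg _)
  _ = Real.exp (-lam * t0 + n * Lam) := (Real.exp_add _ _).symm
  _ ≤ Real.exp (-(K : ℝ) * (1 - τ) * psiKL a q) := by
      apply Real.exp_le_exp.2
      rw [hpsi, ht0]
      have key : (1 - τ) * (K:ℝ) * (lam - Lam) ≤ n * (lam - Lam) :=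
        mul_le_mul_of_nonneg_right hn1τ (by linarith)
      have haux : (1 - τ) * a * (K : ℝ) = (α - τ) * K := by rw [haτ]
      nlinarith [key, haux]
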